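/- Fix d₁, d₂ ≥ 1 with d = d₁ + d₂. The number of degree-d covers π : ℙ¹ → ℙ¹ with π^*(0) = d₁·x_i + d₂·x_l, π^*(∞) = d·x_p, π(x_j) = π(x_k) = 1 with x_j ≠ x_k, and no other ramification beyond that forced over 0 and ∞, up to isomorphism fixing the marked points, is d − 1. -/

import Mathlib

/-- Data of a degree-`d` cover `π(z) = c z^d` of `ℙ¹` totally ramified over `0` and `∞`
(the component with the ramification profile `(d₁,d₂)` over `0` being collapsed),
with the marked point `x_p` over `∞`, and two distinct marked points `x_j ≠ x_k`
mapping to `1`.  The data is the triple `(c, x_j, x_k)`. -/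
def TypeThreeCover (d : ℕ) : Type :=
  {t : ℂ × ℂ × ℂ // t.1 ≠ 0 ∧ t.1 * t.2.1 ^ d = 1 ∧ t.1 * t.2.2 ^ d = 1 ∧ t.2.1 ≠ t.2.2}

/-- Isomorphism of such covers fixing the marked points: a reparametrization `z ↦ a z`
of the source (`a ≠ 0`), carrying the marked points onto each other and rescaling `c`. -/
def coverIso (d : ℕ) (p q : TypeThreeCover d) : Prop :=
  ∃ a : ℂ, a ≠ 0 ∧ q.1.2.1 = a * p.1.2.1 ∧ q.1.2.2 = a * p.1.2.2 ∧
    q.1.1 = p.1.1 / a ^ d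

lemma xj_ne_zero {d : ℕ} (hd : d ≠ 0) (p : TypeThreeCover d) : p.1.2.1 ≠ 0 := by
  intro h
  have := p.2.2.1
  rw [h, zero_pow hd, mul_zero] at this
  exact one_ne_zero this.symm

/-- the invariant `x_k / x_j` -/
noncomputable def toRoot {d : ℕ} (p : TypeThreeCover d) : ℂ := p.1.2.2 / p.1.2.1

lemma toRoot_spec {d : ℕ} (hd : d ≠ 0) (p : TypeThreeCover d) :
    (toRoot p) ^ d = 1 ∧ toRoot p ≠ 1 := by
  have hj := xj_ne_zero hd p
  constructor
  · have h1 := p.2.2.1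
    have h2 := p.2.2.2.1
    have hc := p.2.1
    rw [toRoot, div_pow]
    field_simp
    have : p.1.1 * p.1.2.2 ^ d = p.1.1 * p.1.2.1 ^ d := by rw [h1, h2]
    exact (mul_left_cancel₀ hc this)
  · intro h
    have : p.1.2.2 = p.1.2.1 := by
      rw [toRoot, div_eq_one_iff_eq hj] at h
      exact h
    exact p.2.2.2.2 this.symm

noncomputable def F {d : ℕ} (hd : d ≠ 0) (p : TypeThreeCover d) :
    {z : ℂ // z ^ d = 1 ∧ z ≠ 1} :=
  ⟨toRoot p, toRoot_spec hd p⟩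

lemma F_respects {d : ℕ} (hd : d ≠ 0) (p q : TypeThreeCover d) (h : coverIso d p q) :
    F hd p = F hd q := by
  obtain ⟨a, ha, h1, h2, _⟩ := h
  have hj := xj_ne_zero hd p
  simp only [F, toRoot, Subtype.mk.injEq, h1, h2]
  field_simp

noncomputable def Fbar {d : ℕ} (hd : d ≠ 0) :
    Quot (coverIso d) → {z : ℂ // z ^ d = 1 ∧ z ≠ 1} :=
  Quot.lift (F hd) (F_respects hd)

lemma Fbar_bij {d : ℕ} (hd : d ≠ 0) : Function.Bijective (Fbar hd) := by
  constructor
  · intro x y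
    induction x using Quot.ind with | _ p =>
    induction y using Quot.ind with | _ q =>
    intro h
    apply Quot.sound
    have hpj := xj_ne_zero hd p
    have hqj := xj_ne_zero hd q
    have hroot : p.1.2.2 / p.1.2.1 = q.1.2.2 / q.1.2.1 := by
      simpa [Fbar, F, toRoot] using h
    refine ⟨q.1.2.1 / p.1.2.1, div_ne_zero hqj hpj, ?_, ?_, ?_⟩
    · field_simp
    · field_simp
      field_simp at hroot
      linear_combination -hroot
    · have hp := p.2.2.1
      have hq := q.2.2.1
      rw [div_pow, div_div_eq_mul_div, eq_div_iff (pow_ne_zero d hqj)]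
      linear_combination hq - hp
  · rintro ⟨z, hz1, hz2⟩
    refine ⟨Quot.mk _ ⟨(1, 1, z), one_ne_zero, by simp, by simp [hz1], fun h => hz2 h.symm⟩, ?_⟩
    simp [Fbar, F, toRoot]

/-- The number of degree-`d = d₁ + d₂` covers `π : ℙ¹ → ℙ¹` with `π^*(0) = d₁ x_i + d₂ x_l`
(collapsed component), `π^*(∞) = d x_p`, `π(x_j) = π(x_k) = 1`, `x_j ≠ x_k`, and no further
ramification, counted up to isomorphism fixing the marked points, is `d − 1`. -/
theorem stmt11 (d₁ d₂ : ℕ) (h1 : 1 ≤ d₁) (h2 : 1 ≤ d₂) :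
    Nat.card (Quot (coverIso (d₁ + d₂))) = (d₁ + d₂) - 1 := by
  set d := d₁ + d₂ with hd
  have hd0 : d ≠ 0 := by omega
  have hdpos : 0 < d := by omega
  rw [Nat.card_eq_of_bijective _ (Fbar_bij hd0)]
  -- count d-th roots of unity distinct from 1
  have e : {z : ℂ // z ^ d = 1 ∧ z ≠ 1} ≃
      {z : ℂ // z ∈ (Polynomial.nthRootsFinset d (1 : ℂ)).erase 1} :=
    Equiv.subtypeEquivRight (fun z => by
      rw [Finset.mem_erase, Polynomial.mem_nthRootsFinset hdpos (1 : ℂ)]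
      tauto)
  rw [Nat.card_congr e, Nat.card_eq_fintype_card, Fintype.card_coe]
  rw [Finset.card_erase_of_mem (by
    rw [Polynomial.mem_nthRootsFinset hdpos (1 : ℂ)]; exact one_pow d)]
  rw [(Complex.isPrimitiveRoot_exp d hd0).card_nthRootsFinset]
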